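/- Let φ : ℝ → ℂ be a Schwartz function with |φ(τ)| ≤ C₀/(1+|τ|) and |φ'(τ)| ≤ C₀/(1+|τ|^3) for all τ. Let f be 1-Lipschitz, let a ∈ ℝ, and suppose for fixed s, t ∈ ℝ that ∫_ℝ (φ(s-x) - φ(t-x)) e^{2πi a x} dx = 0. Then |∫_ℝ (φ(s-x) - φ(t-x)) e^{2πi a x} (f(x) - f(t)) dx| ≤ C |s - t|, where C depends only on C₀ and ∫_ℝ |φ|. -/

import Mathlib

open Real MeasureTheory

/-- Quantitative Lipschitz bound: if `|φ(τ)| ≤ C₀/(1+|τ|)`, `|φ'(τ)| ≤ C₀/(1+|τ|³)`,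
`f` is 1-Lipschitz, and `∫ (φ(s-x)-φ(t-x)) e^{2πiax} dx = 0`, then
`|∫ (φ(s-x)-φ(t-x)) e^{2πiax} (f(x)-f(t)) dx| ≤ C |s-t|` with `C` depending only
on `C₀` and `∫|φ|`. -/
theorem stmt3 (C₀ M : ℝ) :
    ∃ C : ℝ, ∀ (φ : SchwartzMap ℝ ℂ) (f : ℝ → ℂ) (a s t : ℝ),
      (∀ τ : ℝ, ‖φ τ‖ ≤ C₀ / (1 + |τ|)) →
      (∀ τ : ℝ, ‖deriv (⇑φ) τ‖ ≤ C₀ / (1 + |τ| ^ 3)) →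
      (∀ u v : ℝ, ‖f u - f v‖ ≤ |u - v|) →
      (∫ τ : ℝ, ‖φ τ‖) ≤ M →
      (∫ x : ℝ, (φ (s - x) - φ (t - x)) * Complex.exp (2 * π * Complex.I * a * x)) = 0 →
      ‖∫ x : ℝ, (φ (s - x) - φ (t - x)) * Complex.exp (2 * π * Complex.I * a * x) *
          (f x - f t)‖ ≤ C * |s - t| := by
  refine ⟨4 * |M| + 16 * π * |C₀|, fun φ f a s t hφ hφ' hf hM _hcancel => ?_⟩
  have hC₀ : 0 ≤ C₀ := by
    have h0 := hφ 0
    simp only [abs_zero, add_zero, div_one] at h0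
    exact le_trans (norm_nonneg _) h0
  have hexp : ∀ x : ℝ, ‖Complex.exp (2 * ↑π * Complex.I * ↑a * ↑x)‖ = 1 := by
    intro x
    rw [Complex.norm_exp]
    simp [mul_comm]
  set h : ℝ → ℝ := fun x =>
    2 * |s - t| * (‖φ (s - x)‖ + ‖φ (t - x)‖) + |s - t| * C₀ * (16 * (1 + (x - t) ^ 2)⁻¹)
    with hh
  have key : ∀ x : ℝ,
      ‖(φ (s - x) - φ (t - x)) * Complex.exp (2 * π * Complex.I * a * x) * (f x - f t)‖
        ≤ h x := by
    intro x
    have hfx : ‖f x - f t‖ ≤ |x - t| := hf x t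
    have hnm : ‖(φ (s - x) - φ (t - x)) * Complex.exp (2 * π * Complex.I * a * x) *
        (f x - f t)‖ = ‖φ (s - x) - φ (t - x)‖ * ‖f x - f t‖ := by
      rw [norm_mul, norm_mul, hexp, mul_one]
    have hy : (0:ℝ) ≤ |x - t| := abs_nonneg _
    rcases le_or_gt (|x - t|) (2 * |s - t|) with hx | hx
    · have h1 : ‖φ (s - x) - φ (t - x)‖ ≤ ‖φ (s - x)‖ + ‖φ (t - x)‖ := norm_sub_le _ _
      have h2 : ‖f x - f t‖ ≤ 2 * |s - t| := hfx.trans hx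
      have h3 : ‖φ (s - x) - φ (t - x)‖ * ‖f x - f t‖
          ≤ (‖φ (s - x)‖ + ‖φ (t - x)‖) * (2 * |s - t|) :=
        mul_le_mul h1 h2 (norm_nonneg _) (by positivity)
      have h4 : 0 ≤ |s - t| * C₀ * (16 * (1 + (x - t) ^ 2)⁻¹) := by positivity
      rw [hnm, hh]
      simp only []
      nlinarith [h3, h4]
    · -- far case: mean value theorem
      have hmvt : ‖φ (s - x) - φ (t - x)‖
          ≤ (8 * C₀ / (8 + |x - t| ^ 3)) * ‖(s - x) - (t - x)‖ := by
        apply (convex_segment (t - x) (s - x)).norm_image_sub_le_of_norm_deriv_le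
          (fun u _ => φ.differentiable.differentiableAt) ?_
          (left_mem_segment _ _ _) (right_mem_segment _ _ _)
        rintro u hu
        obtain ⟨α, β, hα, hβ, hαβ, rfl⟩ := hu
        have hβ1 : β ≤ 1 := by linarith
        have hα1 : α = 1 - β := by linarith
        set u := α • (t - x) + β • (s - x) with hu
        have huval : u = (t - x) + β * (s - t) := by
          rw [hu, hα1]; simp only [smul_eq_mul]; ring
        have habs : |u| ≥ |x - t| / 2 := by
          have h5 : |t - x| ≤ |u| + |β * (s - t)| := by
            calc |t - x| = |u - β * (s - t)| := by rw [huval]; ring_nf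
              _ ≤ |u| + |β * (s - t)| := by
                  rw [sub_eq_add_neg]
                  exact (abs_add_le _ _).trans (by rw [abs_neg])
          have h6 : |β * (s - t)| ≤ |s - t| := by
            rw [abs_mul, abs_of_nonneg hβ]
            nlinarith [abs_nonneg (s - t)]
          have h7 : |t - x| = |x - t| := abs_sub_comm _ _
          linarith
        have hcube : (|x - t| / 2) ^ 3 ≤ |u| ^ 3 :=
          pow_le_pow_left₀ (by positivity) habs 3
        refine (hφ' u).trans ?_
        rw [div_le_div_iff₀ (by positivity) (by positivity)]
        nlinarith [mul_le_mul_of_nonneg_left hcube hC₀]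
      have hst : ‖(s - x) - (t - x)‖ = |s - t| := by
        rw [Real.norm_eq_abs]; ring_nf
      rw [hst] at hmvt
      have hfar : ‖φ (s - x) - φ (t - x)‖ * ‖f x - f t‖
          ≤ (8 * C₀ / (8 + |x - t| ^ 3)) * |s - t| * |x - t| :=
        mul_le_mul hmvt hfx (norm_nonneg _) (by positivity)
      have hsq : (x - t) ^ 2 = |x - t| ^ 2 := (sq_abs _).symm
      have hcmp : (8 * C₀ / (8 + |x - t| ^ 3)) * |s - t| * |x - t|
          ≤ |s - t| * C₀ * (16 * (1 + |x - t| ^ 2)⁻¹) := by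
        have h8 : (0:ℝ) < 8 + |x - t| ^ 3 := by positivity
        have h1y : (0:ℝ) < 1 + |x - t| ^ 2 := by positivity
        have eL : 8 * C₀ / (8 + |x - t| ^ 3) * |s - t| * |x - t|
            = 8 * C₀ * |s - t| * |x - t| / (8 + |x - t| ^ 3) := by ring
        have eR : |s - t| * C₀ * (16 * (1 + |x - t| ^ 2)⁻¹)
            = 16 * C₀ * |s - t| / (1 + |x - t| ^ 2) := by
          rw [inv_eq_one_div]; ring
        rw [eL, eR, div_le_div_iff₀ h8 h1y]
        have hc : 0 ≤ C₀ * |s - t| := by positivity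
        nlinarith [mul_nonneg (mul_nonneg hc hy) (sq_nonneg (|x - t| - 1)),
          mul_nonneg hc (sq_nonneg (|x - t| - 1)), mul_nonneg hc hy]
      have h9 : 0 ≤ 2 * |s - t| * (‖φ (s - x)‖ + ‖φ (t - x)‖) := by positivity
      rw [hnm, hh]
      simp only []
      rw [hsq]
      linarith [hfar.trans hcmp]
  -- integrability
  have hInt1 : Integrable (fun x => ‖φ (s - x)‖) := (φ.integrable.norm).comp_sub_left s
  have hInt2 : Integrable (fun x => ‖φ (t - x)‖) := (φ.integrable.norm).comp_sub_left t
  have hInt3 : Integrable (fun x : ℝ => (1 + (x - t) ^ 2)⁻¹) :=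
    integrable_inv_one_add_sq.comp_sub_right t
  have hIntA : Integrable (fun x => 2 * |s - t| * (‖φ (s - x)‖ + ‖φ (t - x)‖)) :=
    (hInt1.add hInt2).const_mul _
  have hIntB : Integrable (fun x : ℝ => |s - t| * C₀ * (16 * (1 + (x - t) ^ 2)⁻¹)) :=
    (hInt3.const_mul 16).const_mul _
  have hIntH : Integrable h := hIntA.add hIntB
  have e1 : (∫ x : ℝ, ‖φ (s - x)‖) = ∫ x : ℝ, ‖φ x‖ :=
    integral_sub_left_eq_self (fun x => ‖φ x‖) volume s
  have e2 : (∫ x : ℝ, ‖φ (t - x)‖) = ∫ x : ℝ, ‖φ x‖ :=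
    integral_sub_left_eq_self (fun x => ‖φ x‖) volume t
  have e3 : (∫ x : ℝ, (1 + (x - t) ^ 2)⁻¹) = π := by
    rw [integral_sub_right_eq_self (fun x : ℝ => (1 + x ^ 2)⁻¹) t]
    exact integral_univ_inv_one_add_sq
  have hIφ : 0 ≤ ∫ x : ℝ, ‖φ x‖ := integral_nonneg fun x => norm_nonneg _
  calc ‖∫ x : ℝ, (φ (s - x) - φ (t - x)) * Complex.exp (2 * π * Complex.I * a * x) *
          (f x - f t)‖
      ≤ ∫ x : ℝ, ‖(φ (s - x) - φ (t - x)) * Complex.exp (2 * π * Complex.I * a * x) *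
          (f x - f t)‖ := norm_integral_le_integral_norm _
    _ ≤ ∫ x : ℝ, h x :=
        integral_mono_of_nonneg (Filter.Eventually.of_forall fun x => norm_nonneg _)
          hIntH (Filter.Eventually.of_forall key)
    _ = 2 * |s - t| * ((∫ x : ℝ, ‖φ x‖) + ∫ x : ℝ, ‖φ x‖)
          + |s - t| * C₀ * (16 * π) := by
        rw [hh, integral_add hIntA hIntB, integral_const_mul _ _, integral_const_mul _ _,
          integral_add hInt1 hInt2, e1, e2]
        congr 1
        rw [integral_const_mul _ _, e3]
    _ ≤ (4 * |M| + 16 * π * |C₀|) * |s - t| := by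
        have h1 : (∫ x : ℝ, ‖φ x‖) ≤ |M| := hM.trans (le_abs_self M)
        have h2 : C₀ ≤ |C₀| := le_abs_self C₀
        have hπ : 0 < π := pi_pos
        have h3 := mul_le_mul_of_nonneg_left h1 (abs_nonneg (s - t))
        have h4 := mul_le_mul_of_nonneg_left
          (mul_le_mul_of_nonneg_left h2 (abs_nonneg (s - t))) hπ.le
        nlinarith [abs_nonneg (s - t), abs_nonneg M, abs_nonneg C₀, h3, h4]
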